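/- arXiv:2312.02579 — 4 statements merged into one kernel-verified Lean document; each statement's English description precedes it below -/
import Mathlib

section
/- Let F be a finite field, α a generator of the multiplicative group F^×, and m = |F| − 1 with m = m1 · m2 (m1, m2 positive integers). Let p be any polynomial over F, and let i1, i2 be natural numbers with i1 < m1 and i2 < m2. Set β = α^(i1 + m1·i2) and let p2 = p %ₘ (X^(m2) − C(α^(m2·i1))) be the remainder of p modulo X^(m2) − C(α^(m2·i1)). Then p.eval β = p2.eval β; in particular β is a root of p if and only if β is a root of p2. (Correctness of the inner-loop replacement in Algorithm 5.) -/
open Polynomial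

/-- Correctness of the inner-loop replacement in Algorithm 5. -/
theorem stmt_5 {F : Type*} [Field F] [Fintype F] (α : Fˣ)
    (hα : ∀ x : Fˣ, x ∈ Subgroup.zpowers α)
    (m1 m2 : ℕ) (hm1 : 0 < m1) (hm2 : 0 < m2)
    (hm : Fintype.card F - 1 = m1 * m2)
    (p : F[X]) (i1 i2 : ℕ) (hi1 : i1 < m1) (hi2 : i2 < m2) :
    p.eval ((α : F) ^ (i1 + m1 * i2)) =
      (p %ₘ ((X : F[X]) ^ m2 - C ((α : F) ^ (m2 * i1)))).eval
        ((α : F) ^ (i1 + m1 * i2)) ∧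
    (p.IsRoot ((α : F) ^ (i1 + m1 * i2)) ↔
      (p %ₘ ((X : F[X]) ^ m2 - C ((α : F) ^ (m2 * i1)))).IsRoot
        ((α : F) ^ (i1 + m1 * i2))) := by
  set β : F := (α : F) ^ (i1 + m1 * i2) with hβ
  have hα1 : (α : F) ^ (Fintype.card F - 1) = 1 := by
    exact FiniteField.pow_card_sub_one_eq_one _ (Units.ne_zero α)
  have hβm2 : β ^ m2 = (α : F) ^ (m2 * i1) := by
    rw [hβ, ← pow_mul]
    have : (i1 + m1 * i2) * m2 = m2 * i1 + (m1 * m2) * i2 := by ring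
    rw [this, pow_add, pow_mul (α:F) (m1*m2) i2, ← hm, hα1, one_pow, mul_one]
  have hmonic : ((X : F[X]) ^ m2 - C ((α : F) ^ (m2 * i1))).Monic := by
    apply monic_X_pow_sub_C _ hm2.ne'
  have hdiv : (((X : F[X]) ^ m2 - C ((α : F) ^ (m2 * i1)))).eval β = 0 := by
    simp [hβm2]
  have key : p.eval β = (p %ₘ ((X : F[X]) ^ m2 - C ((α : F) ^ (m2 * i1)))).eval β := by
    conv_lhs => rw [← modByMonic_add_div p ((X : F[X]) ^ m2 - C ((α : F) ^ (m2 * i1)))]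
    simp [hβm2]
  exact ⟨key, by unfold IsRoot; rw [key]⟩
end

section
/- Let F be a finite field, α a generator of the multiplicative group F^×, and m = |F| − 1 with m = m1 · m2 (m1, m2 positive integers). For any polynomial p over F, the set of nonzero roots of p in F equals the set { α^(i1 + m1·i2) : 0 ≤ i1 < m1, 0 ≤ i2 < m2, and (p %ₘ (X^(m2) − C(α^(m2·i1)))).eval (α^(i1 + m1·i2)) = 0 }. (Full correctness of Algorithm 5: the two-cycle optimized search outputs exactly the nonzero roots of p.) -/
open Polynomial

lemma eval_modByMonic_of_root {F : Type*} [Field F] (p q : F[X]) (hq : q.Monic)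
    (β : F) (h : q.eval β = 0) : (p %ₘ q).eval β = p.eval β := by
  conv_rhs => rw [← Polynomial.modByMonic_add_div p q]
  simp [h]

/-- Full correctness of Algorithm 5: the two-cycle optimized search outputs exactly
the nonzero roots of `p`. -/
theorem stmt_6 {F : Type*} [Field F] [Fintype F] (α : Fˣ)
    (hα : ∀ x : Fˣ, x ∈ Subgroup.zpowers α)
    (m1 m2 : ℕ) (hm1 : 0 < m1) (hm2 : 0 < m2)
    (hm : Fintype.card F - 1 = m1 * m2) (p : F[X]) :
    {β : F | β ≠ 0 ∧ p.eval β = 0} =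
      {β : F | ∃ i1 : ℕ, i1 < m1 ∧ ∃ i2 : ℕ, i2 < m2 ∧
        β = (α : F) ^ (i1 + m1 * i2) ∧
        (p %ₘ ((X : F[X]) ^ m2 - C ((α : F) ^ (m2 * i1)))).eval
          ((α : F) ^ (i1 + m1 * i2)) = 0} := by
  have _ : DecidableEq F := Classical.decEq F
  have hcard : Fintype.card Fˣ = m1 * m2 := by
    rw [Fintype.card_units, hm]
  have hone : (α : F) ^ (m1 * m2) = 1 := by
    have : α ^ (m1 * m2) = 1 := by rw [← hcard]; exact pow_card_eq_one
    have := congrArg (Units.val) this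
    simpa using this
  -- key: for i1, the power satisfies the m2-th power relation
  have hpow : ∀ i1 i2 : ℕ, ((α : F) ^ (i1 + m1 * i2)) ^ m2 = (α : F) ^ (m2 * i1) := by
    intro i1 i2
    rw [← pow_mul]
    have : (i1 + m1 * i2) * m2 = m2 * i1 + (m1 * m2) * i2 := by ring
    rw [this, pow_add, pow_mul _ (m1 * m2), hone, one_pow, mul_one]
  have hmonic : ∀ i1 : ℕ, ((X : F[X]) ^ m2 - C ((α : F) ^ (m2 * i1))).Monic := fun i1 =>
    monic_X_pow_sub_C _ hm2.ne'
  have heval : ∀ i1 i2 : ℕ,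
      (p %ₘ ((X : F[X]) ^ m2 - C ((α : F) ^ (m2 * i1)))).eval ((α : F) ^ (i1 + m1 * i2))
        = p.eval ((α : F) ^ (i1 + m1 * i2)) := by
    intro i1 i2
    apply eval_modByMonic_of_root _ _ (hmonic i1)
    simp [hpow i1 i2]
  ext β
  simp only [Set.mem_setOf_eq]
  constructor
  · rintro ⟨hβ, hroot⟩
    obtain ⟨n, hn⟩ := Submonoid.mem_powers_iff _ _ |>.mp
      (mem_powers_iff_mem_zpowers.mpr (hα (Units.mk0 β hβ)))
    have hβeq : β = (α : F) ^ n := by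
      have := congrArg (Units.val) hn
      simpa using this.symm
    set k := n % (m1 * m2) with hk
    have hβk : β = (α : F) ^ k := by
      rw [hβeq]
      conv_lhs => rw [← Nat.div_add_mod n (m1 * m2)]
      rw [pow_add, pow_mul, hone, one_pow, one_mul]
    have hklt : k < m1 * m2 := Nat.mod_lt _ (Nat.mul_pos hm1 hm2)
    refine ⟨k % m1, Nat.mod_lt _ hm1, k / m1, ?_, ?_, ?_⟩
    · exact Nat.div_lt_of_lt_mul (by omega)
    · rw [hβk, Nat.mod_add_div k m1]
    · rw [heval, Nat.mod_add_div k m1, ← hβk]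
      exact hroot
  · rintro ⟨i1, hi1, i2, hi2, rfl, h⟩
    rw [heval] at h
    refine ⟨?_, h⟩
    exact pow_ne_zero _ (Units.ne_zero α)
end

section
/- Let F be a finite field, α a generator of the multiplicative group F^×, and m = |F| − 1 with m = m1 · m2 (m1, m2 positive integers). Let p be a polynomial over F and i1, i2 natural numbers. Let q = p.comp (C(α^(i1)) · X) be the polynomial obtained from p by the substitution x ↦ α^(i1)·x, and let q2 = q %ₘ (X^(m2) − 1). Then q2.eval (α^(m1·i2)) = p.eval (α^(i1 + m1·i2)). (Correctness of the Chien-style form of the proposed algorithm, Algorithm 6, where the outer loop shifts p by α and the inner loop works modulo x^(m2) + 1.) -/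
open Polynomial

/-- Correctness of the Chien-style form of the proposed algorithm (Algorithm 6). -/
theorem stmt_7 {F : Type*} [Field F] [Fintype F] (α : Fˣ)
    (hα : ∀ x : Fˣ, x ∈ Subgroup.zpowers α)
    (m1 m2 : ℕ) (hm1 : 0 < m1) (hm2 : 0 < m2)
    (hm : Fintype.card F - 1 = m1 * m2)
    (p : F[X]) (i1 i2 : ℕ) :
    ((p.comp (C ((α : F) ^ i1) * X)) %ₘ ((X : F[X]) ^ m2 - 1)).eval
        ((α : F) ^ (m1 * i2)) =
      p.eval ((α : F) ^ (i1 + m1 * i2)) := by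
  have hαne : (α : F) ≠ 0 := α.ne_zero
  have hcard : (α : F) ^ (Fintype.card F - 1) = 1 :=
    FiniteField.pow_card_sub_one_eq_one _ hαne
  have hroot : ((α : F) ^ (m1 * i2)) ^ m2 = 1 := by
    rw [← pow_mul]
    have : m1 * i2 * m2 = (Fintype.card F - 1) * i2 := by rw [hm]; ring
    rw [this, pow_mul, hcard, one_pow]
  have hmonic : ((X : F[X]) ^ m2 - 1).Monic := by
    have := monic_X_pow_sub_C (R := F) 1 hm2.ne'
    simpa using this
  have hq := modByMonic_eq_sub_mul_div (p.comp (C ((α : F) ^ i1) * X)) ((X : F[X]) ^ m2 - 1)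
  rw [hq]
  simp [eval_sub, eval_mul, hroot, pow_add]
end

section
/- Let F be a finite field, α a generator of the multiplicative group F^×, and m = |F| − 1 with m = m1 · m2 · m3 (m1, m2, m3 positive integers). Let p be a polynomial over F and i1, i2, i3 natural numbers, and set β = α^(i1 + m1·i2 + m1·m2·i3). Then ((p %ₘ (X^(m2·m3) − C(α^(m2·m3·i1)))) %ₘ (X^(m3) − C(α^(m3·(i1 + m1·i2))))).eval β = p.eval β. (Correctness of the three-level version of the proposed method, as used in Algorithm 7.) -/
open Polynomial

lemma eval_modByMonic_X_pow_sub_C {F : Type*} [Field F] (p : F[X]) {n : ℕ} (hn : 0 < n)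
    {c β : F} (h : β ^ n = c) :
    (p %ₘ ((X : F[X]) ^ n - C c)).eval β = p.eval β := by
  have hmon : ((X : F[X]) ^ n - C c).Monic := monic_X_pow_sub_C c hn.ne'
  rw [Polynomial.modByMonic_eq_sub_mul_div _ ((X : F[X]) ^ n - C c)]
  simp [h]

/-- Correctness of the three-level version of the proposed method (Algorithm 7). -/
theorem stmt_10 {F : Type*} [Field F] [Fintype F] (α : Fˣ)
    (hα : ∀ x : Fˣ, x ∈ Subgroup.zpowers α)
    (m1 m2 m3 : ℕ) (hm1 : 0 < m1) (hm2 : 0 < m2) (hm3 : 0 < m3)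
    (hm : Fintype.card F - 1 = m1 * m2 * m3)
    (p : F[X]) (i1 i2 i3 : ℕ) :
    ((p %ₘ ((X : F[X]) ^ (m2 * m3) - C ((α : F) ^ (m2 * m3 * i1)))) %ₘ
        ((X : F[X]) ^ m3 - C ((α : F) ^ (m3 * (i1 + m1 * i2))))).eval
        ((α : F) ^ (i1 + m1 * i2 + m1 * m2 * i3)) =
      p.eval ((α : F) ^ (i1 + m1 * i2 + m1 * m2 * i3)) := by
  have hα1 : (α : F) ^ (m1 * m2 * m3) = 1 := by
    rw [← hm]
    exact FiniteField.pow_card_sub_one_eq_one _ α.ne_zero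
  have key : ∀ a b : ℕ, (α : F) ^ (a + m1 * m2 * m3 * b) = (α : F) ^ a := by
    intro a b
    rw [pow_add, pow_mul, hα1, one_pow, mul_one]
  have h2 : ((α : F) ^ (i1 + m1 * i2 + m1 * m2 * i3)) ^ m3
      = (α : F) ^ (m3 * (i1 + m1 * i2)) := by
    rw [← pow_mul]
    have : (i1 + m1 * i2 + m1 * m2 * i3) * m3
        = m3 * (i1 + m1 * i2) + m1 * m2 * m3 * i3 := by ring
    rw [this, key]
  have h1 : ((α : F) ^ (i1 + m1 * i2 + m1 * m2 * i3)) ^ (m2 * m3)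
      = (α : F) ^ (m2 * m3 * i1) := by
    rw [← pow_mul]
    have : (i1 + m1 * i2 + m1 * m2 * i3) * (m2 * m3)
        = m2 * m3 * i1 + m1 * m2 * m3 * (i2 + m2 * i3) := by ring
    rw [this, key]
  rw [eval_modByMonic_X_pow_sub_C _ hm3 h2,
      eval_modByMonic_X_pow_sub_C _ (Nat.mul_pos hm2 hm3) h1]
end
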